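/- Under Assumption 2.2 and the condition σ/(4eβ) ≤ C₁ ≤ (1/2)·max{σ/β, 1/4}, the first mesh step size of the mesh generated by φ satisfies h₀ = (σε/β)·ln(N/(N−4)), and consequently (4σ/β)·ε·N⁻¹ ≤ h₀ ≤ (8σ/β)·ε·N⁻¹. -/

import Mathlib

/-- The Bakhvalov-type mesh generating function of Kopteva, with transition
parameter `ϑ = 1/4 - C₁ ε`. -/
noncomputable def phi (β σ ε C₁ : ℝ) (t : ℝ) : ℝ :=
  if t ≤ 1/4 - C₁ * ε then -(σ * ε / β) * Real.log (1 - 4 * t)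
  else if t < 1 - (1/4 - C₁ * ε) then
    ((1 + (σ * ε / β) * Real.log (4 * C₁ * ε)) / (1 - 2 * (1/4 - C₁ * ε)))
        * (t - (1/4 - C₁ * ε))
      + ((σ * ε / β) * Real.log (4 * C₁ * ε) / (1 - 2 * (1/4 - C₁ * ε)))
        * (t - (1 - (1/4 - C₁ * ε)))
  else 1 + (σ * ε / β) * Real.log (1 - 4 * (1 - t))

/-- Mesh points `x_i = φ(i/N)`. -/
noncomputable def meshXK (β σ ε C₁ : ℝ) (N i : ℕ) : ℝ := phi β σ ε C₁ ((i : ℝ) / (N : ℝ))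

/-- Mesh step sizes `h_i = x_{i+1} - x_i`. -/
noncomputable def meshHK (β σ ε C₁ : ℝ) (N i : ℕ) : ℝ :=
  meshXK β σ ε C₁ N (i + 1) - meshXK β σ ε C₁ N i

lemma log_one_sub_bounds (x : ℝ) (hx0 : 0 < x) (hx : x ≤ 1/2) :
    x ≤ -Real.log (1 - x) ∧ -Real.log (1 - x) ≤ 2 * x := by
  have h1x : (0:ℝ) < 1 - x := by linarith
  constructor
  · have := Real.log_le_sub_one_of_pos h1x
    linarith
  · have h : Real.exp (-(2*x)) ≤ 1 - x := by
      have h1 := Real.add_one_le_exp (2*x)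
      have h2 := Real.exp_pos (-(2*x))
      have h3 : Real.exp (-(2*x)) * Real.exp (2*x) = 1 := by
        rw [← Real.exp_add]; simp
      nlinarith [Real.exp_pos (2*x)]
    have := (Real.le_log_iff_exp_le h1x).mpr h
    linarith

theorem stmt_13 (β σ ε C₁ : ℝ) (N : ℕ)
    (hβ : 0 < β) (hσ : 0 < σ) (hε0 : 0 < ε) (hε1 : ε < 1)
    (hN4 : 4 ∣ N) (hN : max 8 (2 * Real.log (σ / β)) ≤ (N : ℝ))
    (hεN : ε ≤ min (β / (4 * σ)) 1 * (N : ℝ)⁻¹)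
    (hC₁l : σ / (4 * Real.exp 1 * β) ≤ C₁)
    (hC₁u : C₁ ≤ 1 / 2 * max (σ / β) (1 / 4)) :
    meshHK β σ ε C₁ N 0 = σ * ε / β * Real.log ((N : ℝ) / ((N : ℝ) - 4)) ∧
    4 * σ / β * ε * (N : ℝ)⁻¹ ≤ meshHK β σ ε C₁ N 0 ∧
    meshHK β σ ε C₁ N 0 ≤ 8 * σ / β * ε * (N : ℝ)⁻¹ := by
  have hN8 : (8:ℝ) ≤ (N:ℝ) := le_trans (le_max_left _ _) hN
  have hNpos : (0:ℝ) < (N:ℝ) := by linarith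
  have hNinv : (0:ℝ) < ((N:ℝ))⁻¹ := by positivity
  have hεle : ε ≤ ((N:ℝ))⁻¹ := by
    calc ε ≤ min (β / (4 * σ)) 1 * (N : ℝ)⁻¹ := hεN
    _ ≤ 1 * (N:ℝ)⁻¹ := by
        apply mul_le_mul_of_nonneg_right (min_le_right _ _) (le_of_lt hNinv)
    _ = (N:ℝ)⁻¹ := one_mul _
  have hC₁pos : 0 < C₁ := lt_of_lt_of_le (by positivity) hC₁l
  -- key bound
  have hkey : C₁ * ε ≤ 1 / (8 * (N:ℝ)) := by
    rcases le_total (σ / β) (1/4) with h | h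
    · have hmax : max (σ / β) (1/4) = (1/4:ℝ) := max_eq_right h
      rw [hmax] at hC₁u
      calc C₁ * ε ≤ (1/8) * ((N:ℝ))⁻¹ := by
            apply mul_le_mul (by linarith) hεle (le_of_lt hε0) (by norm_num)
      _ = 1 / (8 * (N:ℝ)) := by field_simp
    · have hmax : max (σ / β) (1/4) = σ / β := max_eq_left h
      rw [hmax] at hC₁u
      have hε' : ε ≤ β / (4 * σ) * ((N:ℝ))⁻¹ := by
        calc ε ≤ min (β / (4 * σ)) 1 * (N : ℝ)⁻¹ := hεN
        _ ≤ β / (4 * σ) * ((N:ℝ))⁻¹ :=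
            mul_le_mul_of_nonneg_right (min_le_left _ _) (le_of_lt hNinv)
      calc C₁ * ε ≤ (1/2 * (σ/β)) * (β / (4 * σ) * ((N:ℝ))⁻¹) := by
            apply mul_le_mul hC₁u hε' (le_of_lt hε0) (by positivity)
      _ = 1 / (8 * (N:ℝ)) := by field_simp; ring
  have hkey' : C₁ * ε ≤ 1/64 := by
    calc C₁ * ε ≤ 1 / (8 * (N:ℝ)) := hkey
    _ ≤ 1/64 := by
        rw [div_le_div_iff₀ (by linarith) (by norm_num)]; linarith
  have hϑ0 : (0:ℝ) ≤ 1/4 - C₁ * ε := by linarith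
  have h1N : (1:ℝ)/(N:ℝ) ≤ 1/4 - C₁ * ε := by
    have : (1:ℝ)/(N:ℝ) ≤ 1/8 := by
      rw [div_le_div_iff₀ hNpos (by norm_num)]; linarith
    linarith
  -- compute the mesh step
  have hx0 : meshXK β σ ε C₁ N 0 = 0 := by
    have h0 : ((0:ℕ):ℝ)/(N:ℝ) = 0 := by norm_num
    simp only [meshXK, h0, phi]
    rw [if_pos hϑ0]
    norm_num
  have hx1 : meshXK β σ ε C₁ N 1 = -(σ * ε / β) * Real.log (1 - 4 * (1/(N:ℝ))) := by
    simp only [meshXK, phi, Nat.cast_one]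
    rw [if_pos h1N]
  have hval : meshHK β σ ε C₁ N 0 = -(σ * ε / β) * Real.log (1 - 4 * (1/(N:ℝ))) := by
    simp only [meshHK]
    norm_num at hx0 hx1 ⊢
    rw [hx1, hx0]
    ring
  set x : ℝ := 4 / (N:ℝ) with hxdef
  have hxeq : 1 - 4 * (1/(N:ℝ)) = 1 - x := by rw [hxdef]; ring
  have hx0' : 0 < x := by positivity
  have hxhalf : x ≤ 1/2 := by
    rw [hxdef, div_le_div_iff₀ hNpos (by norm_num)]; linarith
  obtain ⟨hlo, hhi⟩ := log_one_sub_bounds x hx0' hxhalf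
  have hlogeq : Real.log ((N : ℝ) / ((N : ℝ) - 4)) = -Real.log (1 - x) := by
    have h1 : 1 - x = ((N:ℝ) - 4) / (N:ℝ) := by
      rw [hxdef]; field_simp
    rw [h1, Real.log_div (by linarith) (by linarith),
        Real.log_div (by linarith) (by linarith)]
    ring
  have hKpos : 0 < σ * ε / β := by positivity
  refine ⟨?_, ?_, ?_⟩
  · rw [hval, hlogeq, hxeq]; ring
  · rw [hval, hxeq]
    have : σ * ε / β * x ≤ σ * ε / β * (-Real.log (1 - x)) :=
      mul_le_mul_of_nonneg_left hlo (le_of_lt hKpos)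
    have hx' : σ * ε / β * x = 4 * σ / β * ε * (N:ℝ)⁻¹ := by
      rw [hxdef]; field_simp
    linarith [hx' ▸ this]
  · rw [hval, hxeq]
    have : σ * ε / β * (-Real.log (1 - x)) ≤ σ * ε / β * (2 * x) :=
      mul_le_mul_of_nonneg_left hhi (le_of_lt hKpos)
    have hx' : σ * ε / β * (2 * x) = 8 * σ / β * ε * (N:ℝ)⁻¹ := by
      rw [hxdef]; field_simp; ring
    linarith [hx' ▸ this]
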